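/- Let γ ≥ 1, s ∈ ℝ, let P⁺, P⁻ be distinct positive reals, and suppose J⁺, J⁻, s satisfy the Rankine–Hugoniot conditions J⁺ − J⁻ = s(P⁺ − P⁻) and ((J⁺)²/P⁺ + (P⁺)^γ) − ((J⁻)²/P⁻ + (P⁻)^γ) = s(J⁺ − J⁻). Set A = sP⁻ − J⁻, c_s(ρ) = √(γρ^{γ−1}), u^± = J^±/P^±. If the Lax 2-shock condition u⁺ + c_s(P⁺) < s < u⁻ + c_s(P⁻) holds, then A > 0 and P⁺ < P⁻. If instead the Lax 1-shock condition u⁺ − c_s(P⁺) < s < u⁻ − c_s(P⁻) holds, then A < 0 and P⁺ > P⁻. -/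
import Mathlib


/-- under the Rankine–Hugoniot conditions, the Lax 2-shock condition
(`u⁺ + c_s(P⁺) < s < u⁻ + c_s(P⁻)`) forces `A = sP⁻ − J⁻ > 0` and `P⁺ < P⁻`, while the Lax
1-shock condition (`u⁺ − c_s(P⁺) < s < u⁻ − c_s(P⁻)`) forces `A < 0` and `P⁺ > P⁻`. -/
theorem stmt_6 (γ s Pp Pm Jp Jm : ℝ) (hγ : 1 ≤ γ) (hPp : 0 < Pp) (hPm : 0 < Pm)
    (hne : Pp ≠ Pm)
    (hRH1 : Jp - Jm = s * (Pp - Pm))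
    (hRH2 : (Jp ^ 2 / Pp + Pp ^ γ) - (Jm ^ 2 / Pm + Pm ^ γ) = s * (Jp - Jm)) :
    ((Jp / Pp + Real.sqrt (γ * Pp ^ (γ - 1)) < s ∧
        s < Jm / Pm + Real.sqrt (γ * Pm ^ (γ - 1))) →
      0 < s * Pm - Jm ∧ Pp < Pm) ∧
    ((Jp / Pp - Real.sqrt (γ * Pp ^ (γ - 1)) < s ∧
        s < Jm / Pm - Real.sqrt (γ * Pm ^ (γ - 1))) →
      s * Pm - Jm < 0 ∧ Pm < Pp) := by
  have hγ0 : 0 < γ := by linarith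
  set cp := Real.sqrt (γ * Pp ^ (γ - 1)) with hcp
  set cm := Real.sqrt (γ * Pm ^ (γ - 1)) with hcm
  have hcpp : 0 < cp := Real.sqrt_pos.mpr (by positivity)
  have hcmp : 0 < cm := Real.sqrt_pos.mpr (by positivity)
  have hA : s * Pm - Jm = s * Pp - Jp := by linear_combination hRH1
  have hdivp : (s * Pp - Jp) / Pp = s - Jp / Pp := by field_simp
  have hdivm : (s * Pm - Jm) / Pm = s - Jm / Pm := by field_simp
  -- monotonicity of sound speed
  have hmono : ∀ a b : ℝ, 0 < a → a ≤ b →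
      Real.sqrt (γ * a ^ (γ - 1)) ≤ Real.sqrt (γ * b ^ (γ - 1)) := by
    intro a b ha hab
    apply Real.sqrt_le_sqrt
    have := Real.rpow_le_rpow ha.le hab (by linarith : (0:ℝ) ≤ γ - 1)
    nlinarith
  constructor
  · rintro ⟨h1, h2⟩
    have k1 : cp < (s * Pm - Jm) / Pp := by rw [hA, hdivp]; linarith
    have k2 : (s * Pm - Jm) / Pm < cm := by rw [hdivm]; linarith
    have hApos : 0 < s * Pm - Jm := by
      have h := mul_pos (lt_trans hcpp k1) hPp
      rwa [div_mul_cancel₀ _ hPp.ne'] at h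
    refine ⟨hApos, ?_⟩
    by_contra h
    push_neg at h
    have hle : Pm ≤ Pp := h
    have hc : cm ≤ cp := hmono Pm Pp hPm hle
    have hd : (s * Pm - Jm) / Pp ≤ (s * Pm - Jm) / Pm :=
      div_le_div_of_nonneg_left hApos.le hPm hle
    linarith
  · rintro ⟨h1, h2⟩
    have k1 : -cp < (s * Pm - Jm) / Pp := by rw [hA, hdivp]; linarith
    have k2 : (s * Pm - Jm) / Pm < -cm := by rw [hdivm]; linarith
    have hAneg : s * Pm - Jm < 0 := by
      have h := mul_neg_of_neg_of_pos (lt_trans k2 (by linarith : -cm < 0)) hPm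
      rwa [div_mul_cancel₀ _ hPm.ne'] at h
    refine ⟨hAneg, ?_⟩
    by_contra h
    push_neg at h
    have hle : Pp ≤ Pm := h
    have hc : cp ≤ cm := hmono Pp Pm hPp hle
    have hd : (Jm - s * Pm) / Pm ≤ (Jm - s * Pm) / Pp :=
      div_le_div_of_nonneg_left (by linarith) hPp hle
    have k1' : (Jm - s * Pm) / Pp < cp := by
      have : (Jm - s * Pm) / Pp = -((s * Pm - Jm) / Pp) := by ring
      rw [this]; linarith
    have k2' : cm < (Jm - s * Pm) / Pm := by
      have : (Jm - s * Pm) / Pm = -((s * Pm - Jm) / Pm) := by ring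
      rw [this]; linarith
    linarith
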